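/- Let n ≥ 3 and let k be an integer coprime to n. For a multiset M of elements of {1,…,⌊n/2⌋}, let kM denote the multiset {{ min(kℓ mod n, n − (kℓ mod n)) : ℓ ∈ M }} (with multiplicity). Then kM is realizable if and only if M is realizable. -/

import Mathlib

/-- The type of the chord joining points `i` and `j` (both `< n`) among `n`
equally spaced points on a circle: `min (|i-j| mod n) (n - |i-j| mod n)`. -/
def chordType (n i j : ℕ) : ℕ :=
  min ((i + n - j) % n) (n - (i + n - j) % n)

/-- The associated multiset of chord types of the path
`p 0, p 1, …, p (n-1)`. -/
def pathMultiset (n : ℕ) (p : ℕ → ℕ) : Multiset ℕ :=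
  (Multiset.range (n - 1)).map fun i => chordType n (p i) (p (i + 1))

/-- `p` is a path on `n` points: it enumerates `{0,…,n-1}` bijectively. -/
def IsPath (n : ℕ) (p : ℕ → ℕ) : Prop :=
  Set.BijOn p (Set.Iio n) (Set.Iio n)

/-- A multiset of chord types is realizable if it is the associated multiset
of some path on `n` points. -/
def Realizable (n : ℕ) (M : Multiset ℕ) : Prop :=
  ∃ p : ℕ → ℕ, IsPath n p ∧ pathMultiset n p = M

/-- `g a = min a.val (n - a.val)`. -/
noncomputable def gfun (n : ℕ) (a : ZMod n) : ℕ := min a.val (n - a.val)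

lemma gfun_neg (n : ℕ) [NeZero n] (a : ZMod n) : gfun n (-a) = gfun n a := by
  unfold gfun
  rw [ZMod.neg_val]
  by_cases h : a = 0
  · simp [h]
  · have hv : 0 < a.val := by
      rcases Nat.eq_zero_or_pos a.val with h0 | h0
      · exact absurd (ZMod.val_eq_zero a |>.mp h0) h
      · exact h0
    have := a.val_lt
    simp only [if_neg h]
    omega

lemma natCast_val_self (n : ℕ) [NeZero n] (a : ZMod n) : ((a.val : ℕ) : ZMod n) = a := by
  rw [ZMod.natCast_val, ZMod.cast_id]

/-- key: `f_k (g a) = g (k * a)`. -/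
lemma fk_gfun (n k : ℕ) [NeZero n] (a : ZMod n) :
    min ((k * gfun n a) % n) (n - (k * gfun n a) % n) = gfun n ((k : ZMod n) * a) := by
  have hval : ∀ b : ZMod n, (k * b.val) % n = ((k : ZMod n) * b).val := by
    intro b
    rw [← ZMod.val_natCast n (k * b.val)]
    push_cast
    rw [natCast_val_self]
  unfold gfun
  rcases min_cases a.val (n - a.val) with ⟨h1, _⟩ | ⟨h1, _⟩
  · rw [h1, hval]
  · rw [h1]
    have hna : ((n - a.val : ℕ) : ZMod n) = -a := by
      have := a.val_lt
      push_cast [Nat.cast_sub this.le]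
      simp [natCast_val_self]
    have : (k * (n - a.val)) % n = ((k : ZMod n) * (-a)).val := by
      rw [← ZMod.val_natCast n (k * (n - a.val))]
      congr 1
      rw [Nat.cast_mul, hna]
    rw [this, mul_neg, ZMod.neg_val]
    by_cases h0 : (k : ZMod n) * a = 0
    · simp [h0]
    · have hv : 0 < ((k : ZMod n) * a).val := by
        rcases Nat.eq_zero_or_pos ((k : ZMod n) * a).val with hz | hz
        · exact absurd (ZMod.val_eq_zero _ |>.mp hz) h0
        · exact hz
      have := ((k : ZMod n) * a).val_lt
      simp only [if_neg h0]
      omega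

lemma chord_eq (n : ℕ) [NeZero n] (a b : ℕ) (hb : b ≤ n) :
    chordType n a b = gfun n ((a : ZMod n) - b) := by
  have h1 : (a + n - b) % n = ((a : ZMod n) - b).val := by
    rw [← ZMod.val_natCast n (a + n - b)]
    congr 1
    rw [Nat.cast_sub (by omega)]
    push_cast
    simp
  unfold chordType gfun
  rw [h1]

lemma realizable_map (n k : ℕ) [NeZero n] (hk : Nat.Coprime k n) (M : Multiset ℕ)
    (h : Realizable n M) :
    Realizable n (M.map fun ℓ => min ((k * ℓ) % n) (n - (k * ℓ) % n)) := by
  obtain ⟨p, hp, hpm⟩ := h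
  set u := ZMod.unitOfCoprime k hk with hu
  refine ⟨fun i => ((k : ZMod n) * (p i : ZMod n)).val, ⟨?_, ?_, ?_⟩, ?_⟩
  · intro x _
    exact ZMod.val_lt _
  · intro x hx y hy hxy
    apply hp.injOn hx hy
    have h2 : (k : ZMod n) * (p x) = (k : ZMod n) * (p y) := by
      have := congrArg (Nat.cast : ℕ → ZMod n) hxy
      rwa [natCast_val_self, natCast_val_self] at this
    rw [← ZMod.coe_unitOfCoprime k hk] at h2
    have h3 : ((p x : ℕ) : ZMod n) = ((p y : ℕ) : ZMod n) := (Units.mul_right_inj u).mp h2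
    have := congrArg ZMod.val h3
    rwa [ZMod.val_cast_of_lt (hp.mapsTo hx), ZMod.val_cast_of_lt (hp.mapsTo hy)] at this
  · intro y hy
    have hy' : y < n := hy
    obtain ⟨x, hx, hpx⟩ := hp.surjOn (a := ((u⁻¹ : (ZMod n)ˣ) * (y : ZMod n)).val)
      (ZMod.val_lt _)
    refine ⟨x, hx, ?_⟩
    show ((k : ZMod n) * (p x : ZMod n)).val = y
    rw [hpx, natCast_val_self, ← ZMod.coe_unitOfCoprime k hk, ← mul_assoc, ← Units.val_mul,
      mul_inv_cancel, Units.val_one, one_mul, ZMod.val_cast_of_lt hy']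
  · rw [← hpm]
    unfold pathMultiset
    rw [Multiset.map_map]
    apply Multiset.map_congr rfl
    intro i hi
    rw [Multiset.mem_range] at hi
    have hpi : p i < n := hp.mapsTo (show i < n by omega)
    have hpi1 : p (i + 1) < n := hp.mapsTo (show i + 1 < n by omega)
    simp only [Function.comp_apply]
    rw [chord_eq n (p i) (p (i+1)) hpi1.le,
        chord_eq n _ _ (ZMod.val_lt _).le, fk_gfun]
    congr 1
    rw [natCast_val_self, natCast_val_self, mul_sub]

/-- For `k` coprime to `n`, the multiset
`kM = {{ min (kℓ mod n) (n - kℓ mod n) : ℓ ∈ M }}` is realizable if and only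
if `M` is realizable. -/
theorem realizable_coprime_mul_iff (n k : ℕ) (hn : 3 ≤ n) (hk : Nat.Coprime k n)
    (M : Multiset ℕ) (hM : ∀ x ∈ M, 1 ≤ x ∧ x ≤ n / 2) :
    Realizable n (M.map fun ℓ => min ((k * ℓ) % n) (n - (k * ℓ) % n)) ↔
      Realizable n M := by
  haveI : NeZero n := ⟨by omega⟩
  constructor
  · intro h
    set u := ZMod.unitOfCoprime k hk with hu
    set k' : ℕ := ((u⁻¹ : (ZMod n)ˣ) : ZMod n).val with hk'
    have hk'c : Nat.Coprime k' n := ZMod.val_coe_unit_coprime _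
    have h2 := realizable_map n k' hk'c _ h
    rw [Multiset.map_map] at h2
    have heq : M.map ((fun ℓ => min ((k' * ℓ) % n) (n - (k' * ℓ) % n)) ∘
        (fun ℓ => min ((k * ℓ) % n) (n - (k * ℓ) % n))) = M := by
      have step : M.map ((fun ℓ => min ((k' * ℓ) % n) (n - (k' * ℓ) % n)) ∘
          (fun ℓ => min ((k * ℓ) % n) (n - (k * ℓ) % n))) = M.map id :=
        Multiset.map_congr rfl (by
          intro ℓ hℓ
          obtain ⟨hℓ1, hℓ2⟩ := hM ℓ hℓ
          have hℓn : ℓ < n := by omega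
          simp only [Function.comp_apply, id_eq]
          have e1 : min ((k * ℓ) % n) (n - (k * ℓ) % n) = gfun n ((k : ZMod n) * ℓ) := by
            unfold gfun
            congr 1 <;> rw [← ZMod.val_natCast n (k * ℓ)] <;> push_cast <;> rfl
          have e2 : gfun n ((ℓ : ℕ) : ZMod n) = ℓ := by
            unfold gfun
            rw [ZMod.val_cast_of_lt hℓn]
            omega
          rw [e1]
          have e3 : min ((k' * gfun n ((k : ZMod n) * ℓ)) % n)
              (n - (k' * gfun n ((k : ZMod n) * ℓ)) % n)
              = gfun n ((k' : ZMod n) * ((k : ZMod n) * ℓ)) := fk_gfun n k' _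
          rw [e3, hk', natCast_val_self, ← ZMod.coe_unitOfCoprime k hk, ← hu, ← mul_assoc,
            ← Units.val_mul, inv_mul_cancel, Units.val_one, one_mul, e2])
      rw [step, Multiset.map_id]
    rwa [heq] at h2
  · exact realizable_map n k hk M
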